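/- Let C = ⟨(b|0), (ℓ | fh + 2f)⟩ be a Z2Z4-additive cyclic code with β odd and fgh = x^β − 1 in Z4[x]. If g = 1 or g = x^s − 1 for some divisor s of β, then Φ(C) is a linear binary code. -/

import Mathlib

open Polynomial

noncomputable section

abbrev Z2 := ZMod 2
abbrev Z4 := ZMod 4

/-- Coefficientwise reduction modulo 2. -/
def ρ : Z4 →+* Z2 := ZMod.castHom (show 2 ∣ 4 by norm_num) Z2

/-- The quotient ring `R[x]/(x^n - 1)`. -/
abbrev QR (R : Type) [CommRing R] (n : ℕ) :=
  Polynomial R ⧸ Ideal.span {(Polynomial.X : Polynomial R) ^ n - 1}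

def pmk {R : Type} [CommRing R] (n : ℕ) (p : Polynomial R) : QR R n :=
  Ideal.Quotient.mk _ p

/-- `Z4[x]`-module structure on `Z2[x]/(x^n-1)` via reduction mod 2;
this gives the action `p ⋆ (b | a) = (p̃ b | p a)` on the product. -/
instance (n : ℕ) : Module (Polynomial Z4) (QR Z2 n) :=
  Module.compHom _ ((Ideal.Quotient.mk _).comp (mapRingHom ρ) : Polynomial Z4 →+* QR Z2 n)

def hat (u : Z4) : Z2 := ((u.val / 2 : ℕ) : Z2)

def til (u : Z4) : Z2 := ((u.val : ℕ) : Z2)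

/-- The Gray map `φ(u') = (û' | ũ' + û')`, with the second block of coordinates
indexed by the right summand. -/
def gray {ι : Type} (u : ι → Z4) : (ι ⊕ ι) → Z2 :=
  Sum.elim (fun i => hat (u i)) (fun i => til (u i) + hat (u i))

/-- The extended Gray map `Φ(u | u') = (u | φ(u'))`. -/
def extGray {ι κ : Type} (v : (ι → Z2) × (κ → Z4)) : (ι → Z2) × ((κ ⊕ κ) → Z2) :=
  (v.1, gray v.2)

/-- Identification of `Z2^n` with `Z2[x]/(x^n-1)`. -/
def toQ2 {n : ℕ} (u : Fin n → Z2) : QR Z2 n :=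
  pmk n (∑ i, Polynomial.C (u i) * Polynomial.X ^ (i : ℕ))

/-- Identification of `Z4^n` with `Z4[x]/(x^n-1)`. -/
def toQ4 {n : ℕ} (u : Fin n → Z4) : QR Z4 n :=
  pmk n (∑ i, Polynomial.C (u i) * Polynomial.X ^ (i : ℕ))

/-- The standard polynomial identification of `Z2^α × Z4^β` with `R_{α,β}`. -/
def ident {α β : ℕ} (v : (Fin α → Z2) × (Fin β → Z4)) : QR Z2 α × QR Z4 β :=
  (toQ2 v.1, toQ4 v.2)

/-- Right cyclic shift: `(u_0,…,u_{n-1}) ↦ (u_{n-1},u_0,…,u_{n-2})`. -/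
def shiftR {n : ℕ} {R : Type} (u : Fin n → R) : Fin n → R :=
  fun i => u ((finRotate n).symm i)

/-- Simultaneous cyclic shift on both blocks of `Z2^α × Z4^β`. -/
def bshift {α β : ℕ} (v : (Fin α → Z2) × (Fin β → Z4)) : (Fin α → Z2) × (Fin β → Z4) :=
  (shiftR v.1, shiftR v.2)

/-- `IsTensorSquare n p q` says that `q = (p ⊗ p)`: `q` is the (monic) divisor of
`x^n - 1` in `Z2[x]` whose roots (in the splitting field of `x^n-1`) are exactly the
products of pairs of roots of `p`. -/
def IsTensorSquare (n : ℕ) (p q : Polynomial Z2) : Prop :=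
  q ∣ (Polynomial.X ^ n - 1) ∧ q.Monic ∧
    ∀ z : ((Polynomial.X : Polynomial Z2) ^ n - 1).SplittingField,
      Polynomial.aeval z q = 0 ↔
        ∃ z₁ z₂, Polynomial.aeval z₁ p = 0 ∧ Polynomial.aeval z₂ p = 0 ∧ z = z₁ * z₂

/-- The Nechaev permutation on `Z2^{2n}` (coordinates indexed by `Fin n ⊕ Fin n`,
with `inr i` standing for position `n + i`): it swaps positions `2i+1` and `n + 2i+1`. -/
def nechaev {n : ℕ} (v : (Fin n ⊕ Fin n) → Z2) : (Fin n ⊕ Fin n) → Z2 :=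
  Sum.elim (fun i => if Odd (i : ℕ) then v (Sum.inr i) else v (Sum.inl i))
    (fun i => if Odd (i : ℕ) then v (Sum.inl i) else v (Sum.inr i))

/-- The extended Nechaev–Gray map `Ψ(u | u') = (u | σ(φ(u')))`. -/
def nechaevGrayExt {α β : ℕ} (v : (Fin α → Z2) × (Fin β → Z4)) :
    (Fin α → Z2) × ((Fin β ⊕ Fin β) → Z2) :=
  (v.1, nechaev (gray v.2))

/-- Identification of `Z2^{2n}` (indexed by `Fin n ⊕ Fin n`) with `Z2[x]/(x^{2n}-1)`. -/
def toQ2D {n : ℕ} (w : (Fin n ⊕ Fin n) → Z2) : QR Z2 (2 * n) :=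
  pmk (2 * n) (∑ i : Fin n,
    (Polynomial.C (w (Sum.inl i)) * Polynomial.X ^ (i : ℕ) +
      Polynomial.C (w (Sum.inr i)) * Polynomial.X ^ (n + (i : ℕ))))

/-- Identification of `Z2^α × Z2^{2β}` with `Z2[x]/(x^α-1) × Z2[x]/(x^{2β}-1)`. -/
def pairD {α β : ℕ} (v : (Fin α → Z2) × ((Fin β ⊕ Fin β) → Z2)) :
    QR Z2 α × QR Z2 (2 * β) :=
  (toQ2 v.1, toQ2D v.2)

def leeWt (u : Z4) : ℕ := min u.val (4 - u.val)

def leeDist {n : ℕ} (u v : Fin n → Z4) : ℕ := ∑ i, leeWt (u i - v i)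

/-! ### Auxiliary lemmas -/

lemma coeff_vecPoly {R : Type} [Semiring R] {n : ℕ} (f : Fin n → R) (j : ℕ) :
    (∑ i : Fin n, Polynomial.C (f i) * Polynomial.X ^ (i:ℕ)).coeff j
      = if h : j < n then f ⟨j, h⟩ else 0 := by
  rw [finset_sum_coeff]
  simp only [coeff_C_mul, coeff_X_pow]
  split
  · next hj =>
    rw [Finset.sum_eq_single (⟨j, hj⟩ : Fin n)]
    · simp
    · intro i _ hne
      simp only [mul_ite, mul_one, mul_zero, ite_eq_right_iff]
      intro hij
      exact absurd (Fin.ext hij.symm) hne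
    · simp
  · next hj =>
    apply Finset.sum_eq_zero
    intro i _
    simp only [mul_ite, mul_one, mul_zero, ite_eq_right_iff]
    intro hij
    exact absurd (hij ▸ i.isLt) hj

lemma poly_eq_zero_of_dvd {β : ℕ} (hβ : 0 < β) {p : Polynomial Z2}
    (hdvd : (X ^ β - 1 : Polynomial Z2) ∣ p) (hdeg : p.degree < β) : p = 0 := by
  by_contra hp
  have h1 : ((X:Polynomial Z2) ^ β - 1).degree ≤ p.degree := degree_le_of_dvd hdvd hp
  have h2 : ((X:Polynomial Z2) ^ β - 1).degree = β := by
    simpa using degree_X_pow_sub_C hβ (1 : Z2)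
  rw [h2] at h1
  exact absurd (lt_of_le_of_lt h1 hdeg) (lt_irrefl _)
noncomputable def Npoly (s k : ℕ) : Polynomial Z2 := ∑ t ∈ Finset.range k, X ^ (s*t)

lemma Npoly_mul (s k : ℕ) : Npoly s k * (X ^ s - 1) = X ^ (s*k) - 1 := by
  have : Npoly s k = ∑ t ∈ Finset.range k, ((X:Polynomial Z2) ^ s) ^ t := by
    unfold Npoly; congr 1; funext t; rw [← pow_mul]
  rw [this, geom_sum_mul, ← pow_mul]

lemma coeff_Npoly_mul (s k : ℕ) (hs : 0 < s) (r : Polynomial Z2)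
    (hr : ∀ j, s ≤ j → r.coeff j = 0) (i : ℕ) :
    (Npoly s k * r).coeff i = if i < s*k then r.coeff (i % s) else 0 := by
  have hNr : Npoly s k * r = ∑ t ∈ Finset.range k, r * X ^ (s*t) := by
    rw [Npoly, Finset.sum_mul]; congr 1; funext t; ring
  rw [hNr, finset_sum_coeff]
  simp only [coeff_mul_X_pow']
  split
  · next hi =>
    have h0 : ∀ t ∈ Finset.range k, t ≠ i / s →
        (if s * t ≤ i then r.coeff (i - s * t) else 0) = 0 := by
      intro t _ hne
      split
      · next hle =>
        apply hr
        rcases Nat.lt_or_ge t (i / s) with hlt | hge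
        · have h1 : s * (t+1) ≤ s * (i/s) := Nat.mul_le_mul_left s hlt
          have h2 := Nat.mul_div_le i s
          have h3 : s * (t+1) = s*t + s := by ring
          omega
        · have hgt : i / s < t := lt_of_le_of_ne hge (Ne.symm hne)
          have h3 : s * (i/s + 1) ≤ s * t := Nat.mul_le_mul_left s hgt
          have h4 := Nat.mod_add_div i s
          have h5 : s * (i/s + 1) = s*(i/s) + s := by ring
          have h6 : i % s < s := Nat.mod_lt i hs
          omega
      · rfl
    have h1 : i / s ∈ Finset.range k := by
      rw [Finset.mem_range]
      exact Nat.div_lt_of_lt_mul (by omega)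
    rw [Finset.sum_eq_single_of_mem (i/s) h1 h0]
    have h2 : s * (i/s) ≤ i := Nat.mul_div_le i s
    rw [if_pos h2]
    congr 1
    have := Nat.mod_add_div i s
    omega
  · next hi =>
    apply Finset.sum_eq_zero
    intro t ht
    rw [Finset.mem_range] at ht
    split
    · next hle =>
      apply hr
      have h1 : s * (t+1) ≤ s * k := Nat.mul_le_mul_left s (by omega)
      have h2 : s * (t+1) = s*t + s := by ring
      omega
    · rfl
open Polynomial

lemma pmk_eq_iff {R : Type} [CommRing R] (n : ℕ) (p q : Polynomial R) :
    pmk n p = pmk n q ↔ (X ^ n - 1 : Polynomial R) ∣ (p - q) := by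
  rw [pmk, pmk, Ideal.Quotient.eq, Ideal.mem_span_singleton]

lemma pmk_add {R : Type} [CommRing R] (n : ℕ) (p q : Polynomial R) :
    pmk n (p + q) = pmk n p + pmk n q := map_add _ p q

lemma smul4 {β : ℕ} (p q : Polynomial Z4) : p • pmk β q = pmk β (p * q) := rfl

lemma smul2 {α : ℕ} (p : Polynomial Z4) (a : Polynomial Z2) :
    p • (pmk α a : QR Z2 α) = pmk α (p.map ρ * a) := rfl

def Tq (n : ℕ) : QR Z4 n →+* QR Z2 n :=
  Ideal.Quotient.lift _ ((Ideal.Quotient.mk _).comp (mapRingHom ρ)) (by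
    intro a ha
    rw [Ideal.mem_span_singleton] at ha
    obtain ⟨c, rfl⟩ := ha
    have : mapRingHom ρ ((X ^ n - 1) * c) = (X ^ n - 1) * c.map ρ := by
      simp [coe_mapRingHom]
    rw [RingHom.comp_apply, this]
    rw [Ideal.Quotient.eq_zero_iff_mem, Ideal.mem_span_singleton]
    exact Dvd.intro _ rfl)

lemma Tq_pmk (n : ℕ) (p : Polynomial Z4) : Tq n (pmk n p) = pmk n (p.map ρ) := rfl

lemma Tq_toQ4 {n : ℕ} (u : Fin n → Z4) : Tq n (toQ4 u) = toQ2 (fun i => ρ (u i)) := by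
  rw [toQ4, Tq_pmk, toQ2]
  congr 1
  rw [Polynomial.map_sum]
  congr 1; funext i
  simp

lemma toQ2_add {n : ℕ} (u v : Fin n → Z2) : toQ2 (u + v) = toQ2 u + toQ2 v := by
  rw [toQ2, toQ2, toQ2, ← pmk_add]
  congr 1
  rw [← Finset.sum_add_distrib]
  congr 1; funext i
  simp [Pi.add_apply, C_add, add_mul]

lemma toQ4_add {n : ℕ} (u v : Fin n → Z4) : toQ4 (u + v) = toQ4 u + toQ4 v := by
  rw [toQ4, toQ4, toQ4, ← pmk_add]
  congr 1
  rw [← Finset.sum_add_distrib]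
  congr 1; funext i
  simp [Pi.add_apply, C_add, add_mul]

lemma toQ2_zero {n : ℕ} : toQ2 (0 : Fin n → Z2) = 0 := by
  rw [toQ2]
  have : (∑ i : Fin n, C ((0:Fin n → Z2) i) * X ^ (i:ℕ)) = 0 := by simp
  rw [this]; rfl

lemma toQ4_zero {n : ℕ} : toQ4 (0 : Fin n → Z4) = 0 := by
  rw [toQ4]
  have : (∑ i : Fin n, C ((0:Fin n → Z4) i) * X ^ (i:ℕ)) = 0 := by simp
  rw [this]; rfl
lemma repr_of_dvd (s k : ℕ) (hs : 0 < s) (hk : 0 < k) (a : Fin (s*k) → Z2) (q : Polynomial Z2)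
    (hdvd : (X ^ (s*k) - 1 : Polynomial Z2) ∣
      ((∑ i : Fin (s*k), C (a i) * X ^ (i:ℕ)) - q * Npoly s k)) :
    ∃ r : Polynomial Z2, (∀ j, s ≤ j → r.coeff j = 0) ∧
      ∀ i : Fin (s*k), a i = r.coeff ((i:ℕ) % s) := by
  set P : Polynomial Z2 := ∑ i : Fin (s*k), C (a i) * X ^ (i:ℕ) with hP
  obtain ⟨d, hd⟩ := hdvd
  have hmonic : ((X:Polynomial Z2) ^ s - 1).Monic := by
    have := monic_X_pow_sub_C (1 : Z2) hs.ne'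
    simpa using this
  set r₀ : Polynomial Z2 := q + (X ^ s - 1) * d with hr₀
  have hβN : (X:Polynomial Z2) ^ (s*k) - 1 = Npoly s k * (X ^ s - 1) := (Npoly_mul s k).symm
  have hPr₀ : P = Npoly s k * r₀ := by
    have h1 : P = q * Npoly s k + ((X:Polynomial Z2) ^ (s*k) - 1) * d := by
      rw [← hd]; ring
    rw [h1, hβN, hr₀]; ring
  set r : Polynomial Z2 := r₀ %ₘ (X ^ s - 1) with hr
  have hrdeg : r.degree < (s : WithBot ℕ) := by
    have h := degree_modByMonic_lt r₀ hmonic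
    have hdegs : ((X:Polynomial Z2) ^ s - 1).degree = s := by
      simpa using degree_X_pow_sub_C hs (1 : Z2)
    rwa [hdegs] at h
  have hrc : ∀ j, s ≤ j → r.coeff j = 0 := by
    intro j hj
    apply coeff_eq_zero_of_degree_lt
    exact lt_of_lt_of_le hrdeg (by exact_mod_cast hj)
  have hsk : 0 < s * k := Nat.mul_pos hs hk
  -- P = Npoly * r exactly
  have hPNr : P = Npoly s k * r := by
    have hdvd2 : (X ^ (s*k) - 1 : Polynomial Z2) ∣ (P - Npoly s k * r) := by
      have hmd := modByMonic_add_div r₀ ((X:Polynomial Z2) ^ s - 1)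
      rw [← hr] at hmd
      have heq : P - Npoly s k * r = ((X:Polynomial Z2) ^ (s*k) - 1) * (r₀ /ₘ (X ^ s - 1)) := by
        rw [hPr₀, hβN]
        linear_combination (Npoly s k) * hmd.symm
      exact ⟨_, heq⟩
    have hdegP : P.degree < ((s*k : ℕ) : WithBot ℕ) := degree_sum_fin_lt a
    have hdegNr : (Npoly s k * r).degree < ((s*k : ℕ) : WithBot ℕ) := by
      rw [degree_lt_iff_coeff_zero]
      intro m hm
      rw [coeff_Npoly_mul s k hs r hrc m, if_neg (by omega)]
    have h0 : P - Npoly s k * r = 0 :=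
      poly_eq_zero_of_dvd hsk hdvd2 (lt_of_le_of_lt (degree_sub_le _ _) (max_lt hdegP hdegNr))
    exact (sub_eq_zero.mp h0)
  refine ⟨r, hrc, ?_⟩
  intro i
  have h1 : a i = P.coeff (i : ℕ) := by
    rw [hP, coeff_vecPoly, dif_pos i.isLt]
  rw [h1, hPNr, coeff_Npoly_mul s k hs r hrc, if_pos i.isLt]

/-- For `C = ⟨(b|0), (ℓ | fh+2f)⟩` with `β` odd and `fgh = x^β-1`, if
`g = 1` or `g = x^s - 1` with `s ∣ β`, then `Φ(C)` is a linear binary code. -/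
theorem extGray_linear_of_g (α β : ℕ) (hβ : Odd β)
    (b ℓ : Polynomial Z2) (f g h : Polynomial Z4)
    (hb : b ∣ Polynomial.X ^ α - 1)
    (hfgh : f * g * h = Polynomial.X ^ β - 1)
    (hg : g = 1 ∨ ∃ s : ℕ, s ∣ β ∧ g = Polynomial.X ^ s - 1) :
    ∃ S : Submodule Z2 ((Fin α → Z2) × ((Fin β ⊕ Fin β) → Z2)),
      (S : Set _) = extGray (ι := Fin α) (κ := Fin β) ''
        {v : (Fin α → Z2) × (Fin β → Z4) |
          ident v ∈ Submodule.span (Polynomial Z4)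
            {((pmk α b : QR Z2 α), (0 : QR Z4 β)),
             (pmk α ℓ, pmk β (f * h + 2 * f))}} := by
  classical
  -- finite decidable facts about Z4 / Z2
  have hgray1 : ∀ u v : Z4, hat u + hat v = hat (u + v + 2*(u*v)) := by decide
  have hgray2 : ∀ u v : Z4, (til u + hat u) + (til v + hat v) =
      til (u + v + 2*(u*v)) + hat (u + v + 2*(u*v)) := by decide
  have hρ2 : ∀ z : Z4, ρ z = 0 → ∀ w : Z4, 2*(z*w) = 0 := by decide
  have hρsurj : Function.Surjective ρ := by decide
  have h2eq : ∀ z w : Z4, ρ z = ρ w → 2*z = 2*w := by decide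
  have hβpos : 0 < β := by rcases hβ with ⟨t, ht⟩; omega
  have hC2 : (2 : Polynomial Z4) = Polynomial.C 2 := by
    rw [show (2:Z4) = 1 + 1 by norm_num, C_add, C_1]; norm_num
  have hCC : (Polynomial.C (2:Z4)) * Polynomial.C (2:Z4) = 0 := by
    rw [← C_mul, show (2*2 : Z4) = 0 by decide, C_0]
  have h2AB : ∀ A B : Polynomial Z4, A.map ρ = B.map ρ →
      Polynomial.C 2 * A = Polynomial.C 2 * B := by
    intro A B hAB
    ext m
    rw [coeff_C_mul, coeff_C_mul]
    apply h2eq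
    have := congrArg (fun p => Polynomial.coeff p m) hAB
    simpa [coeff_map] using this
  set Sp := Submodule.span (Polynomial Z4)
      {((pmk α b : QR Z2 α), (0 : QR Z4 β)), (pmk α ℓ, pmk β (f * h + 2 * f))} with hSp
  -- second-component extraction
  have hsnd : ∀ v : (Fin α → Z2) × (Fin β → Z4), ident v ∈ Sp →
      ∃ q : Polynomial Z4, toQ4 v.2 = pmk β (q * (f*h + 2*f)) := by
    intro v hx
    rw [hSp, Submodule.mem_span_pair] at hx
    obtain ⟨p, q, hpq⟩ := hx
    refine ⟨q, ?_⟩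
    have h2 := congrArg Prod.snd hpq
    simp only [Prod.snd_add, Prod.smul_snd] at h2
    rw [show (ident v).2 = toQ4 v.2 from rfl] at h2
    rw [smul_zero, zero_add, smul4] at h2
    exact h2.symm
  -- KEY: the doubled Hadamard product lies in the code
  have key : ∀ u v : Fin β → Z4,
      (∃ q, toQ4 u = pmk β (q * (f*h + 2*f))) →
      (∃ q, toQ4 v = pmk β (q * (f*h + 2*f))) →
      (((0 : QR Z2 α), toQ4 (fun i => 2*(u i * v i))) : QR Z2 α × QR Z4 β) ∈ Sp := by
    rintro u v ⟨qu, hqu⟩ ⟨qv, hqv⟩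
    have hmap2f : Polynomial.map ρ (2 * f) = 0 := by
      rw [hC2, Polynomial.map_mul, map_C, show ρ 2 = 0 by decide, C_0, zero_mul]
    have hFH : Polynomial.map ρ (f*h + 2*f) = f.map ρ * h.map ρ := by
      rw [Polynomial.map_add, Polynomial.map_mul, hmap2f, add_zero]
    have hu2 : toQ2 (fun i => ρ (u i)) = pmk β (qu.map ρ * (f.map ρ * h.map ρ)) := by
      have := congrArg (Tq β) hqu
      rwa [Tq_toQ4, Tq_pmk, Polynomial.map_mul, hFH] at this
    have hv2 : toQ2 (fun i => ρ (v i)) = pmk β (qv.map ρ * (f.map ρ * h.map ρ)) := by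
      have := congrArg (Tq β) hqv
      rwa [Tq_toQ4, Tq_pmk, Polynomial.map_mul, hFH] at this
    rcases hg with hg1 | ⟨s, hsdvd, hgs⟩
    · -- case g = 1 : the mod-2 reductions vanish
      have hfh1 : f.map ρ * h.map ρ = X ^ β - 1 := by
        have hm := congrArg (Polynomial.map ρ) hfgh
        rw [hg1, mul_one, Polynomial.map_mul, Polynomial.map_sub,
          Polynomial.map_pow, map_X, Polynomial.map_one] at hm
        exact hm
      have hu0 : ∀ i, ρ (u i) = 0 := by
        intro i
        have hdvd : (X ^ β - 1 : Polynomial Z2) ∣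
            (∑ j : Fin β, Polynomial.C (ρ (u j)) * X ^ (j:ℕ)) := by
          rw [toQ2, hfh1] at hu2
          have := (pmk_eq_iff β _ _).mp hu2
          obtain ⟨c, hc⟩ := this
          exact ⟨qu.map ρ + c, by linear_combination hc⟩
        have h0 := poly_eq_zero_of_dvd hβpos hdvd (degree_sum_fin_lt _)
        have h2 : (∑ j : Fin β, Polynomial.C (ρ (u j)) * X ^ (j:ℕ)).coeff (i:ℕ) = ρ (u i) := by
          rw [coeff_vecPoly, dif_pos i.isLt]
        rw [h0, coeff_zero] at h2
        exact h2.symm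
      have hw0 : (fun i => 2*(u i * v i)) = (0 : Fin β → Z4) := by
        funext i; exact hρ2 _ (hu0 i) _
      rw [hw0, toQ4_zero]
      exact Sp.zero_mem
    · -- case g = X^s - 1
      obtain ⟨k, rfl⟩ := hsdvd
      have hs : 0 < s := by
        rcases Nat.eq_zero_or_pos s with rfl | h
        · simp at hβpos
        · exact h
      have hk : 0 < k := by
        rcases Nat.eq_zero_or_pos k with rfl | h
        · simp at hβpos
        · exact h
      have hXs : ((X:Polynomial Z4) ^ s - 1).map ρ = (X ^ s - 1 : Polynomial Z2) := by
        rw [Polynomial.map_sub, Polynomial.map_pow, map_X, Polynomial.map_one]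
      have hmonic2 : ((X:Polynomial Z2) ^ s - 1).Monic := by
        have := monic_X_pow_sub_C (1 : Z2) hs.ne'
        simpa using this
      have hNFH : f.map ρ * h.map ρ = Npoly s k := by
        have hm := congrArg (Polynomial.map ρ) hfgh
        rw [hgs, Polynomial.map_mul, Polynomial.map_mul, hXs, Polynomial.map_sub,
          Polynomial.map_pow, map_X, Polynomial.map_one] at hm
        have h2 : (f.map ρ * h.map ρ) * (X ^ s - 1) = Npoly s k * (X ^ s - 1) := by
          rw [Npoly_mul]; linear_combination hm
        exact mul_right_cancel₀ hmonic2.ne_zero h2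
      have hud : (X ^ (s*k) - 1 : Polynomial Z2) ∣
          ((∑ i : Fin (s*k), Polynomial.C (ρ (u i)) * X ^ (i:ℕ)) - (qu.map ρ) * Npoly s k) := by
        rw [toQ2, hNFH] at hu2
        exact (pmk_eq_iff _ _ _).mp hu2
      have hvd : (X ^ (s*k) - 1 : Polynomial Z2) ∣
          ((∑ i : Fin (s*k), Polynomial.C (ρ (v i)) * X ^ (i:ℕ)) - (qv.map ρ) * Npoly s k) := by
        rw [toQ2, hNFH] at hv2
        exact (pmk_eq_iff _ _ _).mp hv2
      obtain ⟨ru, hruc, hru⟩ := repr_of_dvd s k hs hk (fun i => ρ (u i)) (qu.map ρ) hud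
      obtain ⟨rv, hrvc, hrv⟩ := repr_of_dvd s k hs hk (fun i => ρ (v i)) (qv.map ρ) hvd
      set rp : Polynomial Z2 :=
        ∑ j : Fin s, Polynomial.C (ru.coeff (j:ℕ) * rv.coeff (j:ℕ)) * X ^ (j:ℕ) with hrp
      have hrpc : ∀ j, s ≤ j → rp.coeff j = 0 := by
        intro j hj; rw [hrp, coeff_vecPoly, dif_neg (by omega)]
      have hrpcoeff : ∀ j, j < s → rp.coeff j = ru.coeff j * rv.coeff j := by
        intro j hj; rw [hrp, coeff_vecPoly, dif_pos hj]
      have hprod : (∑ i : Fin (s*k), Polynomial.C (ρ (u i) * ρ (v i)) * X ^ (i:ℕ))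
          = Npoly s k * rp := by
        ext m
        rw [coeff_vecPoly, coeff_Npoly_mul s k hs rp hrpc]
        by_cases hm : m < s*k
        · rw [dif_pos hm, if_pos hm, hrpcoeff _ (Nat.mod_lt m hs)]
          rw [hru ⟨m, hm⟩, hrv ⟨m, hm⟩]
        · rw [dif_neg hm, if_neg hm]
      obtain ⟨R, hR⟩ := Polynomial.map_surjective ρ hρsurj rp
      have hA : (∑ i : Fin (s*k), Polynomial.C (u i * v i) * X ^ (i:ℕ)).map ρ
          = (f*h*R).map ρ := by
        have hl : (∑ i : Fin (s*k), Polynomial.C (u i * v i) * X ^ (i:ℕ)).map ρ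
            = ∑ i : Fin (s*k), Polynomial.C (ρ (u i) * ρ (v i)) * X ^ (i:ℕ) := by
          rw [Polynomial.map_sum]
          congr 1; funext i
          rw [Polynomial.map_mul, map_C, Polynomial.map_pow, map_X, map_mul]
        rw [hl, hprod, Polynomial.map_mul, Polynomial.map_mul, hR, hNFH]
      have h2A := h2AB _ _ hA
      have hgen : ((pmk α ℓ, pmk (s*k) (f*h+2*f)) : QR Z2 α × QR Z4 (s*k)) ∈ Sp := by
        apply Submodule.subset_span
        simp
      have hsm := Sp.smul_mem (Polynomial.C 2 * R) hgen
      have hfst : (Polynomial.C 2 * R) • (pmk α ℓ : QR Z2 α) = 0 := by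
        rw [smul2, Polynomial.map_mul, map_C, show ρ 2 = 0 by decide, C_0, zero_mul, zero_mul]
        exact map_zero _
      have hsnd2 : (Polynomial.C 2 * R) • (pmk (s*k) (f*h+2*f) : QR Z4 (s*k))
          = toQ4 (fun i => 2*(u i * v i)) := by
        rw [smul4, toQ4]
        have hpoly : (∑ i : Fin (s*k), Polynomial.C (2*(u i * v i)) * X ^ (i:ℕ))
            = Polynomial.C 2 * (∑ i : Fin (s*k), Polynomial.C (u i * v i) * X ^ (i:ℕ)) := by
          rw [Finset.mul_sum]
          congr 1; funext i
          rw [C_mul, mul_assoc]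
        have hid : (Polynomial.C 2 * R) * (f*h+2*f) = Polynomial.C 2 * (f*h*R) := by
          have hd : (Polynomial.C 2 * R) * (f*h+2*f) - Polynomial.C 2 * (f*h*R)
              = (Polynomial.C 2 * Polynomial.C 2) * (R*f) := by
            rw [hC2]; ring
          rw [hCC, zero_mul] at hd
          exact sub_eq_zero.mp hd
        rw [hid, hpoly, h2A]
      have heq : (Polynomial.C 2 * R) • ((pmk α ℓ, pmk (s*k) (f*h+2*f)) : QR Z2 α × QR Z4 (s*k))
          = (((0:QR Z2 α), toQ4 (fun i => 2*(u i * v i)))) := by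
        have hsplit : (Polynomial.C 2 * R) • ((pmk α ℓ, pmk (s*k) (f*h+2*f)) : QR Z2 α × QR Z4 (s*k))
            = ((Polynomial.C 2 * R) • (pmk α ℓ : QR Z2 α),
               (Polynomial.C 2 * R) • (pmk (s*k) (f*h+2*f) : QR Z4 (s*k))) := rfl
        rw [hsplit, hfst, hsnd2]
      rw [← heq]
      exact hsm
  -- the image set, and its closure properties
  have hzero : (0 : (Fin α → Z2) × ((Fin β ⊕ Fin β) → Z2)) ∈
      extGray (ι := Fin α) (κ := Fin β) '' {v | ident v ∈ Sp} := by
    refine ⟨(0, 0), ?_, ?_⟩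
    · show ident ((0,0) : (Fin α → Z2) × (Fin β → Z4)) ∈ Sp
      have : ident ((0,0) : (Fin α → Z2) × (Fin β → Z4)) = 0 := by
        rw [ident]
        show ((toQ2 0, toQ4 0) : QR Z2 α × QR Z4 β) = 0
        rw [toQ2_zero, toQ4_zero]
        rfl
      rw [this]
      exact Sp.zero_mem
    · rw [extGray]
      have hg0 : gray (0 : Fin β → Z4) = 0 := by
        funext x
        cases x with
        | inl i =>
          simp only [gray, Sum.elim_inl, Pi.zero_apply]
          decide
        | inr i =>
          simp only [gray, Sum.elim_inr, Pi.zero_apply]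
          decide
      show ((0, gray (0 : Fin β → Z4)) : (Fin α → Z2) × ((Fin β ⊕ Fin β) → Z2)) = 0
      rw [hg0]
      rfl
  have hadd : ∀ x y : (Fin α → Z2) × ((Fin β ⊕ Fin β) → Z2),
      x ∈ extGray (ι := Fin α) (κ := Fin β) '' {v | ident v ∈ Sp} →
      y ∈ extGray (ι := Fin α) (κ := Fin β) '' {v | ident v ∈ Sp} →
      x + y ∈ extGray (ι := Fin α) (κ := Fin β) '' {v | ident v ∈ Sp} := by
    rintro _ _ ⟨v1, hv1, rfl⟩ ⟨v2, hv2, rfl⟩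
    refine ⟨(v1.1 + v2.1, v1.2 + v2.2 + fun i => 2*(v1.2 i * v2.2 i)), ?_, ?_⟩
    · show ident _ ∈ Sp
      have h3 : ident ((v1.1 + v2.1, v1.2 + v2.2 + fun i => 2*(v1.2 i * v2.2 i)) :
            (Fin α → Z2) × (Fin β → Z4))
          = ident v1 + ident v2 + (((0:QR Z2 α), toQ4 (fun i => 2*(v1.2 i * v2.2 i)))) := by
        show ((toQ2 (v1.1 + v2.1), toQ4 (v1.2 + v2.2 + fun i => 2*(v1.2 i * v2.2 i))) :
            QR Z2 α × QR Z4 β) = _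
        have hfst : toQ2 (v1.1 + v2.1) = toQ2 v1.1 + toQ2 v2.1 + 0 := by
          rw [toQ2_add, add_zero]
        have hsnd3 : toQ4 (v1.2 + v2.2 + fun i => 2*(v1.2 i * v2.2 i))
            = toQ4 v1.2 + toQ4 v2.2 + toQ4 (fun i => 2*(v1.2 i * v2.2 i)) := by
          rw [toQ4_add, toQ4_add]
        rw [Prod.ext_iff]
        exact ⟨hfst, hsnd3⟩
      rw [h3]
      exact Sp.add_mem (Sp.add_mem hv1 hv2)
        (key v1.2 v2.2 (hsnd v1 hv1) (hsnd v2 hv2))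
    · rw [extGray, extGray, extGray]
      show ((v1.1 + v2.1, _) : (Fin α → Z2) × ((Fin β ⊕ Fin β) → Z2))
          = (v1.1 + v2.1, gray v1.2 + gray v2.2)
      rw [Prod.ext_iff]
      refine ⟨rfl, ?_⟩
      funext x
      cases x with
      | inl i =>
        show hat ((v1.2 + v2.2 + fun i => 2*(v1.2 i * v2.2 i)) i)
            = hat (v1.2 i) + hat (v2.2 i)
        show hat (v1.2 i + v2.2 i + 2*(v1.2 i * v2.2 i)) = _
        rw [← hgray1]
      | inr i =>
        show til ((v1.2 + v2.2 + fun i => 2*(v1.2 i * v2.2 i)) i)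
              + hat ((v1.2 + v2.2 + fun i => 2*(v1.2 i * v2.2 i)) i)
            = (til (v1.2 i) + hat (v1.2 i)) + (til (v2.2 i) + hat (v2.2 i))
        show til (v1.2 i + v2.2 i + 2*(v1.2 i * v2.2 i))
              + hat (v1.2 i + v2.2 i + 2*(v1.2 i * v2.2 i)) = _
        rw [← hgray2]
  have hc01 : ∀ c : ZMod 2, c = 0 ∨ c = 1 := by decide
  refine ⟨{ carrier := extGray (ι := Fin α) (κ := Fin β) '' {v | ident v ∈ Sp}
          , add_mem' := fun {x y} hx hy => hadd x y hx hy
          , zero_mem' := hzero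
          , smul_mem' := ?_ }, rfl⟩
  intro c x hx
  rcases hc01 c with rfl | rfl
  · rw [zero_smul]
    exact hzero
  · rw [one_smul]
    exact hx
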